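/- arXiv:2010.09247 — 2 statements merged into one kernel-verified Lean document; each statement's English description precedes it below -/
import Mathlib

section
/- Suppose the sequence (C^k)_{k∈ℕ} in ℝ^N satisfies the recursion C^{k+1} = P(D C^k + V) for all k ∈ ℕ, and suppose there exists an integer K ≥ 1 with C^K = C^0 (periodicity after K laps). Then for every k ∈ ℕ, C^k = (I − PD)^{-1} P V; in particular the sequence (C^k)_{k∈ℕ} is constant. -/
/-- If `(C^k)` satisfies `C^{k+1} = P (D C^k + V)` and is `K`-periodic for some `K ≥ 1`
(`C^K = C^0`), then `C^k = (I - PD)⁻¹ P V` for every `k`; in particular the sequence is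
constant. Here `P` is the permutation matrix of `σ` (acting by `(P.mulVec X) n = X (σ n)`)
and `D` is the diagonal matrix with entries `d n`, `0 < d n < 1`. -/
theorem stmt4 (N : ℕ) (hN : 1 ≤ N) (σ : Equiv.Perm (Fin N)) (d : Fin N → ℝ)
    (hd : ∀ n, 0 < d n ∧ d n < 1)
    (P D : Matrix (Fin N) (Fin N) ℝ)
    (hP : P = Matrix.of fun i j => if σ i = j then (1 : ℝ) else 0)
    (hD : D = Matrix.diagonal d)
    (V : Fin N → ℝ) (C : ℕ → Fin N → ℝ)
    (hrec : ∀ k : ℕ, C (k + 1) = P.mulVec (D.mulVec (C k) + V))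
    (K : ℕ) (hK : 1 ≤ K) (hper : C K = C 0) :
    ∀ k : ℕ, C k = ((1 : Matrix (Fin N) (Fin N) ℝ) - P * D)⁻¹.mulVec (P.mulVec V) := by
  have hNe : Nonempty (Fin N) := ⟨⟨0, hN⟩⟩
  set M : Matrix (Fin N) (Fin N) ℝ := P * D with hM
  -- action of M
  have hPact : ∀ (x : Fin N → ℝ) (i : Fin N), P.mulVec x i = x (σ i) := by
    intro x i
    simp [hP, Matrix.mulVec, dotProduct, ite_mul]
  have hMact : ∀ (x : Fin N → ℝ) (i : Fin N), M.mulVec x i = d (σ i) * x (σ i) := by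
    intro x i
    rw [hM, ← Matrix.mulVec_mulVec, hPact, hD]
    simp [Matrix.mulVec_diagonal]
  -- sup norm
  set nrm : (Fin N → ℝ) → ℝ := fun x => Finset.univ.sup' (Finset.univ_nonempty) fun i => |x i|
    with hnrm
  have hle : ∀ (x : Fin N → ℝ) i, |x i| ≤ nrm x := fun x i =>
    Finset.le_sup' (fun j => |x j|) (Finset.mem_univ i)
  have hnrm_nonneg : ∀ x, 0 ≤ nrm x := fun x => le_trans (abs_nonneg _) (hle x (Classical.arbitrary _))
  set c : ℝ := Finset.univ.sup' (Finset.univ_nonempty) d with hc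
  have hc0 : 0 ≤ c := le_trans (hd (Classical.arbitrary _)).1.le
    (Finset.le_sup' _ (Finset.mem_univ _))
  have hc1 : c < 1 := by
    rw [hc, Finset.sup'_lt_iff]
    exact fun i _ => (hd i).2
  have hcontr : ∀ x, nrm (M.mulVec x) ≤ c * nrm x := by
    intro x
    rw [hnrm]
    apply Finset.sup'_le
    intro i _
    rw [hMact, abs_mul, abs_of_pos (hd (σ i)).1]
    exact mul_le_mul (Finset.le_sup' _ (Finset.mem_univ _)) (hle x (σ i)) (abs_nonneg _)
      hc0
  -- rewrite recursion
  have hrec' : ∀ k, C (k + 1) = M.mulVec (C k) + P.mulVec V := by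
    intro k
    rw [hrec k, Matrix.mulVec_add, ← Matrix.mulVec_mulVec]
  -- differences
  set f : ℕ → Fin N → ℝ := fun k => C (k + 1) - C k with hf
  have hfsucc : ∀ k, f (k + 1) = M.mulVec (f k) := by
    intro k
    rw [hf]
    simp only [hrec' k, hrec' (k + 1), Matrix.mulVec_sub]
    abel
  have hfbound : ∀ k, nrm (f k) ≤ c ^ k * nrm (f 0) := by
    intro k
    induction k with
    | zero => simp
    | succ n ih =>
      calc nrm (f (n + 1)) = nrm (M.mulVec (f n)) := by rw [hfsucc]
        _ ≤ c * nrm (f n) := hcontr _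
        _ ≤ c * (c ^ n * nrm (f 0)) := by
            exact mul_le_mul_of_nonneg_left ih hc0
        _ = c ^ (n + 1) * nrm (f 0) := by ring
  -- periodicity propagates
  have hper' : ∀ k, C (k + K) = C k := by
    intro k
    induction k with
    | zero => simpa using hper
    | succ n ih =>
      have : n + 1 + K = (n + K) + 1 := by ring
      rw [this, hrec', ih, ← hrec']
  have hfK : f K = f 0 := by
    rw [hf]
    simp only
    have h1 : K + 1 = 0 + 1 + K := by ring
    rw [h1, hper' (0 + 1)]
    have h2 : (K : ℕ) = 0 + K := by ring
    rw [h2, hper' 0]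
  -- f 0 = 0
  have hf0 : f 0 = 0 := by
    by_contra h
    have hpos : 0 < nrm (f 0) := by
      rcases lt_or_eq_of_le (hnrm_nonneg (f 0)) with h' | h'
      · exact h'
      · exfalso; apply h
        funext i
        have := hle (f 0) i
        rw [← h'] at this
        have := abs_nonpos_iff.mp this
        simpa using this
    have : nrm (f 0) ≤ c ^ K * nrm (f 0) := by
      calc nrm (f 0) = nrm (f K) := by rw [hfK]
        _ ≤ c ^ K * nrm (f 0) := hfbound K
    have hlt : c ^ K * nrm (f 0) < 1 * nrm (f 0) :=
      mul_lt_mul_of_pos_right (pow_lt_one₀ hc0 hc1 (by omega)) hpos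
    rw [one_mul] at hlt
    linarith
  -- constant sequence
  have hconst : ∀ k, C k = C 0 := by
    intro k
    induction k with
    | zero => rfl
    | succ n ih =>
      have h10 : C 1 = C 0 := by
        have := hf0
        rw [hf] at this
        simp only at this
        have := sub_eq_zero.mp this
        simpa using this
      rw [hrec' n, ih, ← hrec' 0, h10]
  -- invertibility of 1 - M
  have hdet : ((1 : Matrix (Fin N) (Fin N) ℝ) - M).det ≠ 0 := by
    intro hdet0
    obtain ⟨v, hv, hv0⟩ := (Matrix.exists_mulVec_eq_zero_iff).mpr hdet0
    apply hv
    have hvM : v = M.mulVec v := by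
      have := hv0
      rw [Matrix.sub_mulVec, Matrix.one_mulVec, sub_eq_zero] at this
      exact this
    have : nrm v ≤ c * nrm v := by
      conv_lhs => rw [hvM]
      exact hcontr v
    have hv00 : nrm v ≤ 0 := by nlinarith [hnrm_nonneg v]
    funext i
    have := hle v i
    have := abs_nonpos_iff.mp (le_trans this hv00)
    simpa using this
  -- fixed point equation
  have hfix : ((1 : Matrix (Fin N) (Fin N) ℝ) - M).mulVec (C 0) = P.mulVec V := by
    have := hrec' 0
    rw [hconst 1] at this
    rw [Matrix.sub_mulVec, Matrix.one_mulVec]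
    nth_rewrite 1 [this]
    abel
  intro k
  rw [hconst k]
  have := congrArg (((1 : Matrix (Fin N) (Fin N) ℝ) - M)⁻¹.mulVec) hfix
  rwa [Matrix.mulVec_mulVec, Matrix.nonsing_inv_mul _ hdet.isUnit, Matrix.one_mulVec] at this
end

section
/- Suppose the sequence (C^k)_{k∈ℕ} in ℝ^N satisfies the recursion C^{k+1} = P(D C^k + V) for all k ∈ ℕ, and suppose there exists an integer K ≥ 1 with C^K = C^0. Then C^1 = C^0; that is, every KT-periodic evolution of the photo-inhibition states is already T-periodic (periodic after a single lap). -/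
/-- If `(C^k)` satisfies `C^{k+1} = P (D C^k + V)` and `C^K = C^0` for some `K ≥ 1`, then
`C^1 = C^0`: every `KT`-periodic evolution is already `T`-periodic. Here `P` is the
permutation matrix of `σ` (acting by `(P.mulVec X) n = X (σ n)`) and `D` is the diagonal
matrix with entries `d n`, `0 < d n < 1`. -/
theorem stmt5 (N : ℕ) (hN : 1 ≤ N) (σ : Equiv.Perm (Fin N)) (d : Fin N → ℝ)
    (hd : ∀ n, 0 < d n ∧ d n < 1)
    (P D : Matrix (Fin N) (Fin N) ℝ)
    (hP : P = Matrix.of fun i j => if σ i = j then (1 : ℝ) else 0)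
    (hD : D = Matrix.diagonal d)
    (V : Fin N → ℝ) (C : ℕ → Fin N → ℝ)
    (hrec : ∀ k : ℕ, C (k + 1) = P.mulVec (D.mulVec (C k) + V))
    (K : ℕ) (hK : 1 ≤ K) (hper : C K = C 0) :
    C 1 = C 0 := by
  -- pointwise recursion
  have hpt : ∀ k n, C (k + 1) n = d (σ n) * C k (σ n) + V (σ n) := by
    intro k n
    have := congrFun (hrec k) n
    rw [hP, hD] at this
    simpa [Matrix.mulVec, dotProduct, Matrix.diagonal, Finset.sum_ite_eq,
      Pi.add_apply, mul_comm] using this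
  set Δ : ℕ → Fin N → ℝ := fun k n => C (k + 1) n - C k n with hΔ
  have hΔrec : ∀ k n, Δ (k + 1) n = d (σ n) * Δ k (σ n) := by
    intro k n
    simp only [hΔ, hpt]
    ring
  have hne : (Finset.univ : Finset (Fin N)).Nonempty := by
    refine ⟨⟨0, hN⟩, Finset.mem_univ _⟩
  set m : ℝ := Finset.univ.sup' hne (fun n => |Δ 0 n|) with hm
  have hle0 : ∀ n, |Δ 0 n| ≤ m := fun n =>
    Finset.le_sup' (fun n => |Δ 0 n|) (Finset.mem_univ n)
  have hm0 : 0 ≤ m := le_trans (abs_nonneg _) (hle0 ⟨0, hN⟩)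
  have hle : ∀ k n, |Δ k n| ≤ m := by
    intro k
    induction k with
    | zero => exact hle0
    | succ k ih =>
      intro n
      rw [hΔrec]
      rw [abs_mul, abs_of_pos (hd (σ n)).1]
      calc d (σ n) * |Δ k (σ n)| ≤ 1 * m := by
            exact mul_le_mul (le_of_lt (hd (σ n)).2) (ih (σ n)) (abs_nonneg _) zero_le_one
        _ = m := one_mul m
  -- periodicity of C propagates
  have hCper : ∀ k, C (k + K) = C k := by
    intro k
    induction k with
    | zero => simpa using hper
    | succ k ih =>
      have : k + 1 + K = (k + K) + 1 := by ring
      rw [this, hrec, ih, hrec]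
  have hΔper : ∀ n, Δ K n = Δ 0 n := by
    intro n
    have h1 : C (K + 1) n = C 1 n := by
      have := hCper 1
      rw [show (1 + K) = K + 1 by ring] at this
      exact congrFun this n
    simp only [hΔ, h1, congrFun hper n]
  -- m = 0
  have hmz : m = 0 := by
    by_contra hmne
    have hmpos : 0 < m := lt_of_le_of_ne hm0 (Ne.symm hmne)
    -- there exists n₀ with |Δ 0 n₀| = m
    obtain ⟨n₀, -, hn₀⟩ := Finset.exists_mem_eq_sup' hne (fun n => |Δ 0 n|)
    -- strict bound: |Δ K n₀| < m
    obtain ⟨K', rfl⟩ : ∃ K', K = K' + 1 := ⟨K - 1, (Nat.succ_pred_eq_of_pos hK).symm⟩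
    have hlt : |Δ (K' + 1) n₀| < m := by
      rw [hΔrec, abs_mul, abs_of_pos (hd (σ n₀)).1]
      calc d (σ n₀) * |Δ K' (σ n₀)| ≤ d (σ n₀) * m :=
            mul_le_mul_of_nonneg_left (hle K' (σ n₀)) (le_of_lt (hd (σ n₀)).1)
        _ < 1 * m := by
            exact mul_lt_mul_of_pos_right (hd (σ n₀)).2 hmpos
        _ = m := one_mul m
    rw [hΔper n₀, ← hn₀] at hlt
    exact lt_irrefl _ hlt
  funext n
  have : |Δ 0 n| ≤ 0 := hmz ▸ hle0 n
  have := abs_nonpos_iff.mp this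
  have : C 1 n - C 0 n = 0 := this
  linarith
end
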